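/- For a balanced Boolean function f on Z_2^n (n ≥ 3), the sum-of-squares indicator satisfies σ_f = 2^{2n} + 2^6 ∑_{x ≠ 0} (b_x - 2^{n-3})^2, where b_x = (1/2) ∑_y f(y) f(y ⊕ x). -/

import Mathlib

open Finset

/-- `(-1)^{f(x)}` as an integer. -/
def bhat {n : ℕ} (f : (Fin n → ZMod 2) → ZMod 2) (x : Fin n → ZMod 2) : ℤ :=
  (-1) ^ (f x).val

/-- Autocorrelation `Δ_f(α) = ∑_x (-1)^{f(x)} (-1)^{f(x ⊕ α)}`. -/
def autocorr {n : ℕ} (f : (Fin n → ZMod 2) → ZMod 2) (a : Fin n → ZMod 2) : ℤ :=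
  ∑ x : Fin n → ZMod 2, bhat f x * bhat f (x + a)

/-- `b_x = (1/2) ∑_y f(y) f(y ⊕ x)`, with the `0/1` values taken in `ℚ`. -/
def bcoef {n : ℕ} (f : (Fin n → ZMod 2) → ZMod 2) (x : Fin n → ZMod 2) : ℚ :=
  (1 / 2) * ∑ y : Fin n → ZMod 2, ((f y).val : ℚ) * ((f (y + x)).val : ℚ)

/-- `f` takes the value `1` exactly `2^{n-1}` times. -/
def IsBalancedBF {n : ℕ} (f : (Fin n → ZMod 2) → ZMod 2) : Prop :=
  (Finset.univ.filter fun x => f x = 1).card = 2 ^ (n - 1)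

/-- Sum-of-squares indicator `σ_f`. -/
def sos {n : ℕ} (f : (Fin n → ZMod 2) → ZMod 2) : ℤ :=
  ∑ a : Fin n → ZMod 2, (autocorr f a) ^ 2

lemma zmod2_cases (a : ZMod 2) : a = 0 ∨ a = 1 := by fin_cases a <;> [exact Or.inl rfl; exact Or.inr rfl]

lemma bhat_eq {n : ℕ} (f : (Fin n → ZMod 2) → ZMod 2) (x : Fin n → ZMod 2) :
    (bhat f x : ℚ) = 1 - 2 * ((f x).val : ℚ) := by
  rcases zmod2_cases (f x) with h | h <;>
    simp only [bhat, h, ZMod.val_one, ZMod.val_zero] <;> norm_num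

lemma val_sum {n : ℕ} (f : (Fin n → ZMod 2) → ZMod 2) (hf : IsBalancedBF f) :
    ∑ x : Fin n → ZMod 2, ((f x).val : ℚ) = 2 ^ (n - 1) := by
  have : ∀ x : Fin n → ZMod 2, ((f x).val : ℚ) = if f x = 1 then 1 else 0 := by
    intro x
    rcases zmod2_cases (f x) with h | h <;>
      simp only [h, ZMod.val_one, ZMod.val_zero] <;> norm_num
  rw [Finset.sum_congr rfl fun x _ => this x, Finset.sum_boole]
  rw [IsBalancedBF] at hf
  rw [hf]
  push_cast
  ring

lemma val_sum_shift {n : ℕ} (f : (Fin n → ZMod 2) → ZMod 2) (hf : IsBalancedBF f)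
    (a : Fin n → ZMod 2) :
    ∑ x : Fin n → ZMod 2, ((f (x + a)).val : ℚ) = 2 ^ (n - 1) := by
  exact (Fintype.sum_equiv (Equiv.addRight a) (fun x => ((f (x + a)).val : ℚ))
    (fun x => ((f x).val : ℚ)) (fun x => rfl)).trans (val_sum f hf)

lemma card_cube (n : ℕ) : (Finset.univ : Finset (Fin n → ZMod 2)).card = 2 ^ n := by
  simp [Finset.card_univ]

lemma autocorr_cast {n : ℕ} (hn : 1 ≤ n) (f : (Fin n → ZMod 2) → ZMod 2)
    (hf : IsBalancedBF f) (a : Fin n → ZMod 2) :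
    (autocorr f a : ℚ) = 8 * bcoef f a - 2 ^ n := by
  have h1 := val_sum f hf
  have h2 := val_sum_shift f hf a
  have hpow : (2 : ℚ) * 2 ^ (n - 1) = 2 ^ n := by
    rw [← pow_succ']
    congr 1
    omega
  have : (autocorr f a : ℚ)
      = ∑ x : Fin n → ZMod 2, (1 - 2 * ((f x).val : ℚ) - 2 * ((f (x + a)).val : ℚ)
          + 4 * (((f x).val : ℚ) * ((f (x + a)).val : ℚ))) := by
    rw [autocorr]
    push_cast
    refine Finset.sum_congr rfl fun x _ => ?_
    rw [bhat_eq, bhat_eq]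
    ring
  rw [this]
  rw [Finset.sum_add_distrib, Finset.sum_sub_distrib, Finset.sum_sub_distrib,
    ← Finset.mul_sum, ← Finset.mul_sum, ← Finset.mul_sum, h1, h2,
    Finset.sum_const, card_cube, bcoef]
  push_cast
  linear_combination (-2 : ℚ) * hpow

theorem sos_eq_balanced {n : ℕ} (hn : 3 ≤ n) (f : (Fin n → ZMod 2) → ZMod 2)
    (hf : IsBalancedBF f) :
    (sos f : ℚ) =
      2 ^ (2 * n) +
        2 ^ 6 * ∑ x ∈ Finset.univ.filter (fun x : Fin n → ZMod 2 => x ≠ 0),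
          (bcoef f x - 2 ^ (n - 3)) ^ 2 := by
  have hac0 : (autocorr f 0 : ℚ) = 2 ^ n := by
    have hterm : ∀ x : Fin n → ZMod 2, bhat f x * bhat f (x + 0) = 1 := by
      intro x
      rw [add_zero, bhat, ← pow_add, ← two_mul, pow_mul]
      norm_num
    have : autocorr f 0 = 2 ^ n := by
      rw [autocorr, Finset.sum_congr rfl fun x _ => hterm x, Finset.sum_const,
        card_cube, nsmul_eq_mul, mul_one]
      push_cast
      ring
    rw [this]
    push_cast
    ring
  have hpow3 : (8 : ℚ) * 2 ^ (n - 3) = 2 ^ n := by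
    rw [show (8:ℚ) = 2^3 by norm_num, ← pow_add]
    congr 1
    omega
  have hsq : ∀ a : Fin n → ZMod 2, ((autocorr f a : ℚ)) ^ 2
      = (8 * (bcoef f a - 2 ^ (n-3))) ^ 2 := by
    intro a
    rw [autocorr_cast (by omega) f hf a, mul_sub, hpow3]
  have : (sos f : ℚ) = ∑ a : Fin n → ZMod 2, ((autocorr f a : ℚ)) ^ 2 := by
    rw [sos]; push_cast; rfl
  rw [this, ← Finset.add_sum_erase _ _ (Finset.mem_univ (0 : Fin n → ZMod 2)),
    hac0, Finset.filter_ne']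
  rw [Finset.sum_congr rfl fun a _ => hsq a]
  rw [show (2:ℚ)^(2*n) = (2^n)^2 by rw [← pow_mul, mul_comm]]
  congr 1
  rw [Finset.mul_sum]
  refine Finset.sum_congr rfl fun a _ => ?_
  ring
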